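/- For every integer k ≥ 3, sup_{n ∈ ℤ₊} sup over bipartite graphs G ∈ B(n,n) of (1/n^{2+k}) Σ_{i,j=1}^n |deg(x_i) - deg(y_j)|^k equals sup_{n ∈ ℤ₊} sup over sequences b = (b_1,...,b_n) ∈ {0,1,...,n}^n of (1/n^{2+k}) Σ_{i,j=1}^n |b*_i - b_j|^k, where b* is the conjugate partition of b. -/

import Mathlib

/-- The set of values `(1/n^{2+k}) Σ_{i,j} |deg(x_i) - deg(y_j)|^k` over all `n ≥ 1` and all
bipartite graphs in `B(n,n)`, encoded by their biadjacency matrices `A : Fin n → Fin n → Bool`;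
`deg(x_i)` is the `i`-th row sum and `deg(y_j)` the `j`-th column sum of `A`. -/
def bipartiteDegVals (k : ℕ) : Set ℝ :=
  { r : ℝ | ∃ n : ℕ, 0 < n ∧ ∃ A : Fin n → Fin n → Bool,
      r = (1 / (n : ℝ) ^ (2 + k)) * ∑ i : Fin n, ∑ j : Fin n,
        |(∑ l : Fin n, if A i l then (1 : ℝ) else 0) -
          (∑ l : Fin n, if A l j then (1 : ℝ) else 0)| ^ k }

/-- The conjugate partition of a sequence `b = (b_1, …, b_n)` with `0 ≤ b_i ≤ n`:
`b*_i = |{j : b_j ≥ i}|`, where the index `i : Fin n` represents the integer `i + 1`. -/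
def conjugatePartition {n : ℕ} (b : Fin n → ℕ) (i : Fin n) : ℕ :=
  (Finset.univ.filter fun j => (i : ℕ) + 1 ≤ b j).card

/-- The set of values `(1/n^{2+k}) Σ_{i,j} |b*_i - b_j|^k` over all `n ≥ 1` and all sequences
`b ∈ {0, 1, …, n}^n`, where `b*` is the conjugate partition of `b`. -/
def conjPartitionVals (k : ℕ) : Set ℝ :=
  { r : ℝ | ∃ n : ℕ, 0 < n ∧ ∃ b : Fin n → ℕ, (∀ j, b j ≤ n) ∧
      r = (1 / (n : ℝ) ^ (2 + k)) * ∑ i : Fin n, ∑ j : Fin n,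
        |((conjugatePartition b i : ℝ)) - (b j : ℝ)| ^ k }


section AuxiliaryLemmas
open Finset

lemma slope_mono_both {g : ℝ → ℝ} (hg : ConvexOn ℝ Set.univ g) {a b a' b' : ℝ}
    (h1 : a' ≤ a) (h2 : b' ≤ b) (hab' : a' < b') (hab : a < b) :
    (g b' - g a') / (b' - a') ≤ (g b - g a) / (b - a) := by
  have h3 : a' < b := lt_of_lt_of_le hab' h2
  have step1 : (g b' - g a') / (b' - a') ≤ (g b - g a') / (b - a') :=
    hg.secant_mono (Set.mem_univ _) (Set.mem_univ _) (Set.mem_univ _) hab'.ne' h3.ne' h2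
  have step2 : (g a' - g b) / (a' - b) ≤ (g a - g b) / (a - b) :=
    hg.secant_mono (Set.mem_univ _) (Set.mem_univ _) (Set.mem_univ _) h3.ne hab.ne h1
  have e1 : (g a' - g b) / (a' - b) = (g b - g a') / (b - a') := by
    rw [← neg_sub (g b) (g a'), ← neg_sub b a', neg_div_neg_eq]
  have e2 : (g a - g b) / (a - b) = (g b - g a) / (b - a) := by
    rw [← neg_sub (g b) (g a), ← neg_sub b a, neg_div_neg_eq]
  calc (g b' - g a') / (b' - a') ≤ (g b - g a') / (b - a') := step1
    _ = (g a' - g b) / (a' - b) := e1.symm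
    _ ≤ (g a - g b) / (a - b) := step2
    _ = (g b - g a) / (b - a) := e2

/-- Hardy–Littlewood–Pólya style majorization inequality for integer sequences. -/
lemma hlp_convex (n : ℕ) (g : ℝ → ℝ) (hg : ConvexOn ℝ Set.univ g)
    (c w : ℕ → ℕ) (hc : Antitone c) (hw : Antitone w)
    (hmaj : ∀ m, m < n → ∑ j ∈ range m, (c j : ℝ) ≤ ∑ j ∈ range m, (w j : ℝ))
    (hsum : ∑ j ∈ range n, (c j : ℝ) = ∑ j ∈ range n, (w j : ℝ)) :
    ∑ j ∈ range n, g (c j) ≤ ∑ j ∈ range n, g (w j) := by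
  rcases Nat.eq_zero_or_pos n with rfl | hn
  · simp
  set a : ℕ → ℕ := fun j => min (c j) (w j) with ha
  set B : ℕ → ℕ := fun j => max (max (c j) (w j)) (a j + 1) with hB
  set t : ℕ → ℝ := fun j => (g (B j) - g (a j)) / ((B j : ℝ) - (a j : ℝ)) with htdef
  have haB : ∀ j, (a j : ℝ) < (B j : ℝ) := by
    intro j
    have : a j < B j := lt_of_lt_of_le (Nat.lt_succ_self _) (le_max_right _ _)
    exact_mod_cast this
  have ht : Antitone t := by
    intro j j' hjj'
    have h1 : (a j' : ℝ) ≤ a j := by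
      exact_mod_cast min_le_min (hc hjj') (hw hjj')
    have h2 : (B j' : ℝ) ≤ B j := by
      have : B j' ≤ B j := max_le_max (max_le_max (hc hjj') (hw hjj'))
        (Nat.succ_le_succ (min_le_min (hc hjj') (hw hjj')))
      exact_mod_cast this
    exact slope_mono_both hg h1 h2 (haB j') (haB j)
  set d : ℕ → ℝ := fun j => (w j : ℝ) - (c j : ℝ) with hd
  have key : ∀ j, g (w j) - g (c j) = t j * d j := by
    intro j
    rcases lt_trichotomy (c j) (w j) with h | h | h
    · have ha' : a j = c j := min_eq_left h.le
      have hB' : B j = w j := by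
        have h1 : max (c j) (w j) = w j := max_eq_right h.le
        have h2 : a j + 1 ≤ w j := by rw [ha']; omega
        rw [hB]; simp only [h1]; exact max_eq_left h2
      have hne : (w j : ℝ) - (c j : ℝ) ≠ 0 := by
        have : (c j : ℝ) < w j := by exact_mod_cast h
        intro hh; nlinarith
      rw [htdef]; simp only [ha', hB', hd]
      field_simp
    · simp [htdef, hd, h]
    · have ha' : a j = w j := min_eq_right h.le
      have hB' : B j = c j := by
        have h1 : max (c j) (w j) = c j := max_eq_left h.le
        have h2 : a j + 1 ≤ c j := by rw [ha']; omega
        rw [hB]; simp only [h1]; exact max_eq_left h2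
      have hne : (c j : ℝ) - (w j : ℝ) ≠ 0 := by
        have : (w j : ℝ) < c j := by exact_mod_cast h
        intro hh; nlinarith
      rw [htdef]; simp only [ha', hB', hd]
      field_simp
      ring
  have habel := Finset.sum_range_by_parts t d n
  simp only [smul_eq_mul] at habel
  have hdsum : ∑ i ∈ range n, d i = 0 := by
    simp only [hd, Finset.sum_sub_distrib]
    linarith [hsum]
  have hpartial : ∀ i, i < n - 1 → 0 ≤ ∑ j ∈ range (i + 1), d j := by
    intro i hi
    have : i + 1 < n := by omega
    have := hmaj (i + 1) this
    simp only [hd, Finset.sum_sub_distrib]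
    linarith
  have hmain : 0 ≤ ∑ i ∈ range n, t i * d i := by
    rw [habel, hdsum, mul_zero, zero_sub, neg_nonneg]
    apply Finset.sum_nonpos
    intro i hi
    rw [Finset.mem_range] at hi
    have h1 : t (i + 1) - t i ≤ 0 := sub_nonpos.mpr (ht (Nat.le_succ i))
    exact mul_nonpos_of_nonpos_of_nonneg h1 (hpartial i hi)
  have : ∑ j ∈ range n, (g (w j) - g (c j)) = ∑ i ∈ range n, t i * d i :=
    Finset.sum_congr rfl fun j _ => key j
  rw [Finset.sum_sub_distrib] at this
  linarith

lemma card_filter_val_lt (n m : ℕ) (h : m ≤ n) :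
    ((univ : Finset (Fin n)).filter fun l : Fin n => (l : ℕ) < m).card = m := by
  rw [Finset.card_filter]
  rw [Fin.sum_univ_eq_sum_range (fun j => if j < m then 1 else 0) n]
  rw [← Finset.card_filter]
  have : (range n).filter (fun j => j < m) = range m := by
    ext j; simp only [mem_filter, mem_range]; omega
  rw [this, Finset.card_range]

-- min counting
lemma sum_rstar (n : ℕ) (r : Fin n → ℕ) (m : ℕ) :
    ∑ j ∈ range m, ((univ : Finset (Fin n)).filter fun i => j + 1 ≤ r i).card
      = ∑ i : Fin n, min (r i) m := by
  have : ∀ j, ((univ : Finset (Fin n)).filter fun i => j + 1 ≤ r i).card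
      = ∑ i : Fin n, if j + 1 ≤ r i then 1 else 0 := fun j => Finset.card_filter _ _
  simp only [this]
  rw [Finset.sum_comm]
  refine Finset.sum_congr rfl fun i _ => ?_
  rw [← Finset.card_filter]
  have : (range m).filter (fun j => j + 1 ≤ r i) = range (min (r i) m) := by
    ext j; simp only [mem_filter, mem_range]; omega
  rw [this, Finset.card_range]

lemma sum_subset_le (n : ℕ) (A : Fin n → Fin n → Bool) (S : Finset (Fin n)) :
    ∑ j ∈ S, ((univ : Finset (Fin n)).filter fun i => A i j = true).card
      ≤ ∑ i : Fin n, min (((univ : Finset (Fin n)).filter fun l => A i l = true).card) S.card := by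
  have : ∀ j, ((univ : Finset (Fin n)).filter fun i => A i j = true).card
      = ∑ i : Fin n, if A i j = true then 1 else 0 := fun j => Finset.card_filter _ _
  simp only [this]
  rw [Finset.sum_comm]
  refine Finset.sum_le_sum fun i _ => ?_
  rw [← Finset.card_filter]
  refine le_min ?_ ?_
  · exact Finset.card_le_card (Finset.filter_subset_filter _ (Finset.subset_univ S))
  · exact Finset.card_filter_le _ _

lemma sum_dite_perm {n : ℕ} {M : Type*} [AddCommMonoid M] (c : Fin n → ℕ)
    (π : Equiv.Perm (Fin n)) (F : ℕ → M) :
    ∑ j ∈ range n, F (if h : j < n then c (π ⟨j, h⟩) else 0) = ∑ j : Fin n, F (c j) := by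
  rw [← Fin.sum_univ_eq_sum_range (fun j => F (if h : j < n then c (π ⟨j, h⟩) else 0)) n]
  simp only [Fin.is_lt, dif_pos, Fin.eta]
  exact Equiv.sum_comp π (fun j => F (c j))

lemma sum_dite_perm_lt {n : ℕ} (c : Fin n → ℕ) (π : Equiv.Perm (Fin n)) (m : ℕ) (hm : m ≤ n) :
    ∑ j ∈ range m, (if h : j < n then c (π ⟨j, h⟩) else 0)
      = ∑ j ∈ ((univ : Finset (Fin n)).filter fun l : Fin n => (l : ℕ) < m).image π, c j := by
  rw [Finset.sum_image (fun x _ y _ h => π.injective h)]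
  have hmap : ((univ : Finset (Fin n)).filter fun l : Fin n => (l : ℕ) < m).map
      ⟨Fin.val, Fin.val_injective⟩ = range m := by
    ext x
    simp only [Finset.mem_map, Finset.mem_filter, Finset.mem_range, Finset.mem_univ, true_and,
      Function.Embedding.coeFn_mk]
    constructor
    · rintro ⟨l, hl, rfl⟩; exact hl
    · intro hx; exact ⟨⟨x, lt_of_lt_of_le hx hm⟩, hx, rfl⟩
  rw [← hmap, Finset.sum_map]
  refine Finset.sum_congr rfl fun l _ => ?_
  simp only [Function.Embedding.coeFn_mk, Fin.is_lt, dif_pos, Fin.eta]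

lemma convexOn_abs_sub_pow (c : ℝ) (k : ℕ) :
    ConvexOn ℝ Set.univ fun y : ℝ => |c - y| ^ k := by
  have h1 : ConvexOn ℝ Set.univ fun y : ℝ => |c - y| := by
    have := convexOn_univ_dist (E := ℝ) c
    have hfe : (fun y : ℝ => |c - y|) = fun z' => dist z' c := by
      funext y; rw [Real.dist_eq, abs_sub_comm]
    rw [hfe]; exact this
  have := h1.pow (fun x _ => abs_nonneg _) k
  exact this

lemma convexOn_g {n : ℕ} (r : Fin n → ℕ) (k : ℕ) :
    ConvexOn ℝ Set.univ fun y : ℝ => ∑ i : Fin n, |(r i : ℝ) - y| ^ k := by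
  classical
  induction (univ : Finset (Fin n)) using Finset.induction with
  | empty => simpa using convexOn_const (0:ℝ) convex_univ
  | insert a s h ih =>
    simp only [Finset.sum_insert h]
    exact (convexOn_abs_sub_pow _ k).add ih

lemma val_le_one (n k : ℕ) (hn : 0 < n) (f : Fin n → Fin n → ℝ) (hf : ∀ i j, |f i j| ≤ n) :
    (1 / (n : ℝ) ^ (2 + k)) * ∑ i : Fin n, ∑ j : Fin n, |f i j| ^ k ≤ 1 := by
  have hnpos : (0:ℝ) < n := by exact_mod_cast hn
  have hS : ∑ i : Fin n, ∑ j : Fin n, |f i j| ^ k ≤ (n:ℝ) ^ (2 + k) := by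
    have hinner : ∀ i, ∑ j : Fin n, |f i j| ^ k ≤ (n:ℝ) * (n:ℝ) ^ k := by
      intro i
      calc ∑ j : Fin n, |f i j| ^ k ≤ ∑ _j : Fin n, (n:ℝ) ^ k :=
            Finset.sum_le_sum fun j _ => pow_le_pow_left₀ (abs_nonneg _) (hf i j) k
        _ = (n:ℝ) * (n:ℝ) ^ k := by
            simp [Finset.sum_const, Finset.card_univ, nsmul_eq_mul]
    calc ∑ i : Fin n, ∑ j : Fin n, |f i j| ^ k ≤ ∑ _i : Fin n, (n:ℝ) * (n:ℝ) ^ k :=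
          Finset.sum_le_sum fun i _ => hinner i
      _ = (n:ℝ) * ((n:ℝ) * (n:ℝ) ^ k) := by
          simp [Finset.sum_const, Finset.card_univ, nsmul_eq_mul]
      _ = (n:ℝ) ^ (2 + k) := by rw [pow_add]; ring
  have h2 : (0:ℝ) < (n:ℝ) ^ (2 + k) := by positivity
  rw [one_div, inv_mul_le_iff₀ h2, mul_one]
  exact hS




/-- For every integer `k ≥ 3`, the supremum of the normalized degree-difference sums over all
bipartite graphs equals the corresponding supremum over conjugate partitions. -/
theorem sup_bipartite_eq_sup_conjPartition (k : ℕ) (hk : 3 ≤ k) :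
    sSup (bipartiteDegVals k) = sSup (conjPartitionVals k) := by
  classical
  have hbip_le : ∀ x ∈ bipartiteDegVals k, x ≤ 1 := by
    rintro x ⟨n, hn, A, rfl⟩
    refine val_le_one n k hn (fun i j => (∑ l : Fin n, if A i l then (1 : ℝ) else 0) -
      (∑ l : Fin n, if A l j then (1 : ℝ) else 0)) fun i j => ?_
    have h1 : (0:ℝ) ≤ ∑ l : Fin n, (if A i l then (1:ℝ) else 0) :=
      Finset.sum_nonneg fun l _ => by positivity
    have h2 : (∑ l : Fin n, (if A i l then (1:ℝ) else 0)) ≤ n := by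
      calc (∑ l : Fin n, (if A i l then (1:ℝ) else 0)) ≤ ∑ _l : Fin n, (1:ℝ) :=
            Finset.sum_le_sum fun l _ => by split <;> norm_num
        _ = n := by simp
    have h3 : (0:ℝ) ≤ ∑ l : Fin n, (if A l j then (1:ℝ) else 0) :=
      Finset.sum_nonneg fun l _ => by positivity
    have h4 : (∑ l : Fin n, (if A l j then (1:ℝ) else 0)) ≤ n := by
      calc (∑ l : Fin n, (if A l j then (1:ℝ) else 0)) ≤ ∑ _l : Fin n, (1:ℝ) :=
            Finset.sum_le_sum fun l _ => by split <;> norm_num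
        _ = n := by simp
    rw [abs_le]; constructor <;> linarith
  have hconj_le : ∀ x ∈ conjPartitionVals k, x ≤ 1 := by
    rintro x ⟨n, hn, b, hb, rfl⟩
    refine val_le_one n k hn
      (fun i j => ((conjugatePartition b i : ℝ)) - ((b j : ℝ))) fun i j => ?_
    have h1 : conjugatePartition b i ≤ n :=
      le_trans (Finset.card_filter_le _ _) (by simp)
    have h1' : ((conjugatePartition b i : ℕ) : ℝ) ≤ n := by exact_mod_cast h1
    have h2' : ((b j : ℕ) : ℝ) ≤ n := by exact_mod_cast hb j
    have h3' : (0:ℝ) ≤ ((conjugatePartition b i : ℕ) : ℝ) := by positivity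
    have h4' : (0:ℝ) ≤ ((b j : ℕ) : ℝ) := by positivity
    rw [abs_le]; constructor <;> linarith
  have hbipne : (bipartiteDegVals k).Nonempty := ⟨_, 1, one_pos, fun _ _ => false, rfl⟩
  have hconjne : (conjPartitionVals k).Nonempty :=
    ⟨_, 1, one_pos, fun _ => 0, fun _ => Nat.zero_le _, rfl⟩
  have hsubset : conjPartitionVals k ⊆ bipartiteDegVals k := by
    rintro x ⟨n, hn, b, hb, rfl⟩
    refine ⟨n, hn, fun i l => decide ((l : ℕ) + 1 ≤ b i), ?_⟩
    have hrow : ∀ i : Fin n,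
        (∑ l : Fin n, if decide ((l : ℕ) + 1 ≤ b i) = true then (1:ℝ) else 0) = (b i : ℝ) := by
      intro i
      simp only [decide_eq_true_eq]
      rw [Finset.sum_boole]
      have he : ((univ : Finset (Fin n)).filter fun l : Fin n => (l : ℕ) + 1 ≤ b i)
          = ((univ : Finset (Fin n)).filter fun l : Fin n => (l : ℕ) < b i) := by
        ext l; simp only [mem_filter, mem_univ, true_and]; omega
      rw [he, card_filter_val_lt n (b i) (hb i)]
    have hcol : ∀ j : Fin n,
        (∑ l : Fin n, if decide ((j : ℕ) + 1 ≤ b l) = true then (1:ℝ) else 0)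
          = ((conjugatePartition b j : ℕ) : ℝ) := by
      intro j
      simp only [decide_eq_true_eq]
      rw [Finset.sum_boole]
      rfl
    congr 1
    simp only [hrow, hcol]
    calc ∑ i : Fin n, ∑ j : Fin n, |((conjugatePartition b i : ℕ):ℝ) - (b j : ℝ)| ^ k
        = ∑ i : Fin n, ∑ j : Fin n, |(b j : ℝ) - ((conjugatePartition b i : ℕ):ℝ)| ^ k := by
          refine Finset.sum_congr rfl fun i _ => Finset.sum_congr rfl fun j _ => ?_
          rw [abs_sub_comm]
      _ = ∑ j : Fin n, ∑ i : Fin n, |(b j : ℝ) - ((conjugatePartition b i : ℕ):ℝ)| ^ k :=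
          Finset.sum_comm
  have hmain : ∀ x ∈ bipartiteDegVals k, x ≤ sSup (conjPartitionVals k) := by
    rintro x ⟨n, hn, A, rfl⟩
    set r : Fin n → ℕ := fun i => ((univ : Finset (Fin n)).filter fun l => A i l = true).card
      with hrdef
    set cdeg : Fin n → ℕ := fun j => ((univ : Finset (Fin n)).filter fun i => A i j = true).card
      with hcdef
    have hr : ∀ i, r i ≤ n := fun i => le_trans (Finset.card_filter_le _ _) (by simp)
    set rstar : ℕ → ℕ := fun m => ((univ : Finset (Fin n)).filter fun i => m + 1 ≤ r i).card
      with hrstardef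
    have hrow : ∀ i, (∑ l : Fin n, if A i l then (1:ℝ) else 0) = (r i : ℝ) := by
      intro i; rw [Finset.sum_boole]
    have hcol : ∀ j, (∑ l : Fin n, if A l j then (1:ℝ) else 0) = (cdeg j : ℝ) := by
      intro j; rw [Finset.sum_boole]
    set g : ℝ → ℝ := fun y => ∑ i : Fin n, |(r i : ℝ) - y| ^ k with hgdef
    have hgconv : ConvexOn ℝ Set.univ g := convexOn_g r k
    set σ : Equiv.Perm (Fin n) := Tuple.sort cdeg with hσ
    set π : Equiv.Perm (Fin n) := Fin.revPerm.trans σ with hπ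
    set cs : ℕ → ℕ := fun j => if h : j < n then cdeg (π ⟨j, h⟩) else 0 with hcs
    have hπapp : ∀ a : Fin n, π a = σ (Fin.rev a) := by
      intro a; simp [hπ, Equiv.trans_apply]
    have hcs_anti : Antitone cs := by
      intro j j' hjj'
      by_cases hj' : j' < n
      · have hj : j < n := lt_of_le_of_lt hjj' hj'
        simp only [hcs, dif_pos hj', dif_pos hj, hπapp]
        have hrev : Fin.rev (⟨j', hj'⟩ : Fin n) ≤ Fin.rev ⟨j, hj⟩ := by
          rw [Fin.rev_le_rev]; exact hjj'
        have := Tuple.monotone_sort cdeg hrev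
        simpa using this
      · simp only [hcs, dif_neg hj']
        exact Nat.zero_le _
    have hrstar_anti : Antitone rstar := by
      intro m m' hmm'
      apply Finset.card_le_card
      intro i hi
      simp only [mem_filter, mem_univ, true_and] at hi ⊢
      omega
    have hmaj_nat : ∀ m, m ≤ n → ∑ j ∈ range m, cs j ≤ ∑ j ∈ range m, rstar j := by
      intro m hm
      have h1 : ∑ j ∈ range m, cs j
          = ∑ j ∈ ((univ : Finset (Fin n)).filter fun l : Fin n => (l : ℕ) < m).image π,
              cdeg j := by
        simp only [hcs]; exact sum_dite_perm_lt cdeg π m hm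
      have hcard : (((univ : Finset (Fin n)).filter fun l : Fin n => (l : ℕ) < m).image π).card
          = m := by
        rw [Finset.card_image_of_injective _ π.injective, card_filter_val_lt n m hm]
      have h2 := sum_subset_le n A
        (((univ : Finset (Fin n)).filter fun l : Fin n => (l : ℕ) < m).image π)
      rw [hcard] at h2
      have h3 : ∑ j ∈ range m, rstar j = ∑ i : Fin n, min (r i) m := sum_rstar n r m
      rw [h1, h3]
      exact h2
    have hsum_nat : ∑ j ∈ range n, cs j = ∑ j ∈ range n, rstar j := by
      have h1 : ∑ j ∈ range n, cs j = ∑ j : Fin n, cdeg j := by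
        simp only [hcs]; exact sum_dite_perm cdeg π (fun m => m)
      have h2 : ∑ j : Fin n, cdeg j = ∑ i : Fin n, r i := by
        simp only [hcdef, hrdef, Finset.card_filter]
        exact Finset.sum_comm
      have h3 : ∑ j ∈ range n, rstar j = ∑ i : Fin n, min (r i) n := sum_rstar n r n
      rw [h1, h2, h3]
      exact Finset.sum_congr rfl fun i _ => (min_eq_left (hr i)).symm
    have hmajR : ∀ m, m < n → ∑ j ∈ range m, (cs j : ℝ) ≤ ∑ j ∈ range m, (rstar j : ℝ) := by
      intro m hm
      have := hmaj_nat m hm.le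
      exact_mod_cast this
    have hsumR : ∑ j ∈ range n, (cs j : ℝ) = ∑ j ∈ range n, (rstar j : ℝ) := by
      exact_mod_cast hsum_nat
    have hkey : ∑ j ∈ range n, g (cs j) ≤ ∑ j ∈ range n, g (rstar j) :=
      hlp_convex n g hgconv cs rstar hcs_anti hrstar_anti hmajR hsumR
    have hL : ∑ j ∈ range n, g (cs j) = ∑ j : Fin n, g (cdeg j) := by
      simp only [hcs]; exact sum_dite_perm cdeg π (fun m => g m)
    have hR : ∑ j ∈ range n, g (rstar j) = ∑ j : Fin n, g (rstar (j : ℕ)) :=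
      (Fin.sum_univ_eq_sum_range (fun j => g (rstar j)) n).symm
    have hfinal : (1 / (n : ℝ) ^ (2 + k)) * ∑ i : Fin n, ∑ j : Fin n,
        |(∑ l : Fin n, if A i l then (1 : ℝ) else 0) -
          (∑ l : Fin n, if A l j then (1 : ℝ) else 0)| ^ k
        ≤ (1 / (n : ℝ) ^ (2 + k)) * ∑ i : Fin n, ∑ j : Fin n,
        |((conjugatePartition r i : ℕ) : ℝ) - ((r j : ℕ) : ℝ)| ^ k := by
      have hpos : (0:ℝ) ≤ 1 / (n : ℝ) ^ (2 + k) := by positivity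
      apply mul_le_mul_of_nonneg_left _ hpos
      have e1 : ∑ i : Fin n, ∑ j : Fin n,
          |(∑ l : Fin n, if A i l then (1 : ℝ) else 0) -
            (∑ l : Fin n, if A l j then (1 : ℝ) else 0)| ^ k
          = ∑ j : Fin n, g (cdeg j) := by
        simp only [hrow, hcol]
        rw [Finset.sum_comm]
      have e2 : ∑ j : Fin n, g (rstar (j : ℕ)) = ∑ i : Fin n, ∑ j : Fin n,
          |((conjugatePartition r i : ℕ) : ℝ) - ((r j : ℕ) : ℝ)| ^ k := by
        refine Finset.sum_congr rfl fun j _ => ?_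
        simp only [hgdef]
        refine Finset.sum_congr rfl fun i _ => ?_
        rw [abs_sub_comm]
        rfl
      rw [e1, ← e2, ← hR, ← hL]
      exact hkey
    refine le_trans hfinal (le_csSup ⟨1, fun y hy => hconj_le y hy⟩ ?_)
    exact ⟨n, hn, r, hr, rfl⟩
  exact le_antisymm (csSup_le hbipne hmain)
    (csSup_le_csSup ⟨1, fun y hy => hbip_le y hy⟩ hconjne hsubset)


end AuxiliaryLemmas
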